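/- Let K, F, Z, S be positive integers with Z < F and S ≥ F−Z. If a (K,F,Z,S)-PDA exists, then a (K, S, S−F+Z, F)-PDA exists. Consequently K_{(F,F−Z,S)} = K_{(S,F−Z,F)}, i.e., the maximum K admitting a (K,F,Z,S)-PDA equals the maximum K admitting a (K,S,S−F+Z,F)-PDA. -/

import Mathlib

/-- A `(K, F, Z, S)` placement delivery array: an `F × K` array over
`{0, …, S-1} ∪ {*}` (with `none` playing the role of `*`) such that
(1) each integer occurs at most once in each row and in each column,
(2) whenever two distinct cells `(a, b)` and `(c, d)` contain the same
integer, the opposite corners `(a, d)` and `(c, b)` contain `*`, and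
(3) the symbol `*` occurs exactly `Z` times in each column. -/
def IsPDA (K F Z S : ℕ) (P : Fin F → Fin K → Option (Fin S)) : Prop :=
  (∀ (i : Fin F) (j j' : Fin K) (s : Fin S), P i j = some s → P i j' = some s → j = j') ∧
  (∀ (i i' : Fin F) (j : Fin K) (s : Fin S), P i j = some s → P i' j = some s → i = i') ∧
  (∀ (a c : Fin F) (b d : Fin K) (s : Fin S),
      (a, b) ≠ (c, d) → P a b = some s → P c d = some s →
      P a d = none ∧ P c b = none) ∧
  (∀ j : Fin K, (Finset.univ.filter (fun i => P i j = none)).card = Z)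

/-- There exists a `(K, F, Z, S)` placement delivery array. -/
def PDAExists (K F Z S : ℕ) : Prop :=
  ∃ P : Fin F → Fin K → Option (Fin S), IsPDA K F Z S P

/-- `maxK F Z S` is the largest `K` such that a `(K, F, Z, S)`-PDA exists
(the quantity `K_{(F, F-Z, S)}` of the paper). -/
noncomputable def maxK (F Z S : ℕ) : ℕ := sSup {K : ℕ | PDAExists K F Z S}

lemma pda_exists_zero (F Z S : ℕ) : PDAExists 0 F Z S := by
  refine ⟨fun _ j => j.elim0, ?_, ?_, ?_, ?_⟩
  · exact fun i j => j.elim0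
  · exact fun i i' j => j.elim0
  · exact fun a c b => b.elim0
  · exact fun j => j.elim0

lemma pda_dual_exists {K F Z S : ℕ} (hS : 0 < S) (hP : PDAExists K F Z S) :
    PDAExists K S (S - (F - Z)) F := by
  classical
  obtain ⟨P, h1, h2, h3, h4⟩ := hP
  set A : Fin S → Fin K → Option (Fin F) := fun i j =>
    if h : ∃ f, P f j = some i then some h.choose else none with hA
  have key : ∀ (i : Fin S) (j : Fin K) (f : Fin F), A i j = some f ↔ P f j = some i := by
    intro i j f
    simp only [hA]
    split
    · next h =>
      constructor
      · rintro hf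
        cases Option.some.inj hf
        exact h.choose_spec
      · intro hf
        have := h2 f h.choose j i hf h.choose_spec
        rw [this]
    · next h =>
      constructor
      · intro hf; exact absurd hf (by simp)
      · intro hf; exact absurd ⟨f, hf⟩ h
  have keyn : ∀ (i : Fin S) (j : Fin K), A i j = none ↔ ∀ f, P f j ≠ some i := by
    intro i j
    rw [Option.eq_none_iff_forall_not_mem]
    constructor
    · intro h f hf
      exact h f ((key i j f).2 hf)
    · intro h f hf
      exact h f ((key i j f).1 hf)
  refine ⟨A, ?_, ?_, ?_, ?_⟩
  · intro i j j' f hjf hj'f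
    exact h1 f j j' i ((key i j f).1 hjf) ((key i j' f).1 hj'f)
  · intro i i' j f hi hi'
    have := ((key i j f).1 hi).symm.trans ((key i' j f).1 hi')
    exact Option.some.inj this
  · intro a c b d f hne hab hcd
    have hPb : P f b = some a := (key a b f).1 hab
    have hPd : P f d = some c := (key c d f).1 hcd
    have hbd : b ≠ d := by
      rintro rfl
      have : a = c := Option.some.inj (hPb.symm.trans hPd)
      exact hne (by rw [this])
    constructor
    · rw [keyn]
      intro f' hf'
      have hcells : ((f, b) : Fin F × Fin K) ≠ (f', d) := by
        intro h; exact hbd (congrArg Prod.snd h)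
      have := h3 f f' b d a hcells hPb hf'
      rw [this.1] at hPd; cases hPd
    · rw [keyn]
      intro f' hf'
      have hcells : ((f', b) : Fin F × Fin K) ≠ (f, d) := by
        intro h; exact hbd (congrArg Prod.snd h)
      have := h3 f' f b d c hcells hf' hPd
      rw [this.2] at hPb; cases hPb
  · intro j
    set i0 : Fin S := ⟨0, hS⟩
    have hsum : (Finset.univ.filter (fun f : Fin F => P f j = none)).card +
        (Finset.univ.filter (fun f : Fin F => ¬ P f j = none)).card = F := by
      rw [Finset.card_filter_add_card_filter_not]
      simp
    have hTcard : (Finset.univ.filter (fun f : Fin F => ¬ P f j = none)).card = F - Z := by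
      rw [h4 j] at hsum; omega
    have himg : Finset.univ.filter (fun i : Fin S => ¬ A i j = none) =
        (Finset.univ.filter (fun f : Fin F => ¬ P f j = none)).image
          (fun f => (P f j).getD i0) := by
      ext i
      simp only [Finset.mem_filter, Finset.mem_image, Finset.mem_univ, true_and]
      constructor
      · intro h
        obtain ⟨f, hf⟩ := Option.ne_none_iff_exists'.1 h
        have hPf : P f j = some i := (key i j f).1 hf
        exact ⟨f, by simp [hPf], by simp [hPf]⟩
      · rintro ⟨f, hf, rfl⟩
        obtain ⟨v, hv⟩ := Option.ne_none_iff_exists'.1 hf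
        rw [hv, Option.getD_some]
        intro hn
        exact (keyn v j).1 hn f hv
    have hinj : Set.InjOn (fun f => (P f j).getD i0)
        ↑(Finset.univ.filter (fun f : Fin F => ¬ P f j = none)) := by
      intro f hf f' hf' hff'
      simp only [Finset.coe_filter, Set.mem_setOf_eq, Finset.mem_univ, true_and] at hf hf'
      obtain ⟨v, hv⟩ := Option.ne_none_iff_exists'.1 hf
      obtain ⟨v', hv'⟩ := Option.ne_none_iff_exists'.1 hf'
      simp only [hv, hv', Option.getD_some] at hff'
      subst hff'
      exact h2 f f' j v hv hv'
    have hcardimg : (Finset.univ.filter (fun i : Fin S => ¬ A i j = none)).card = F - Z := by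
      rw [himg, Finset.card_image_of_injOn hinj, hTcard]
    have hsum' : (Finset.univ.filter (fun i : Fin S => A i j = none)).card +
        (Finset.univ.filter (fun i : Fin S => ¬ A i j = none)).card = S := by
      rw [Finset.card_filter_add_card_filter_not]
      simp
    rw [hcardimg] at hsum'
    omega

theorem pda_dual (K F Z S : ℕ) (hK : 0 < K) (hZ : 0 < Z) (hS : 0 < S) (hZF : Z < F)
    (hSF : F - Z ≤ S) (hP : PDAExists K F Z S) :
    PDAExists K S (S - (F - Z)) F ∧ maxK F Z S = maxK S (S - (F - Z)) F := by
  have hF : 0 < F := lt_trans hZ hZF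
  have hiff : ∀ K', PDAExists K' F Z S ↔ PDAExists K' S (S - (F - Z)) F := by
    intro K'
    constructor
    · intro h
      exact pda_dual_exists hS h
    · intro h
      have := pda_dual_exists hF h
      have heq : F - (S - (S - (F - Z))) = Z := by omega
      rwa [heq] at this
  refine ⟨(hiff K).1 hP, ?_⟩
  unfold maxK
  congr 1
  ext K'
  exact hiff K'
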